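/- Let F̄ : [0, ∞) → [0, 1] be log-concave on [0, ∞). Then for all integers u ≥ 2 and r ≥ 1, all real numbers t_1 ≤ t_2 ≤ … ≤ t_u, and every x ≥ 0, Π_{i=1}^{u} F̄((x + u(t_u − t_i))/r)^{r/u} ≤ Π_{i=1}^{u−1} F̄((x + (u−1)(t_u − t_i))/r)^{r/(u−1)}. If instead F̄ is log-convex on [0, ∞), the inequality is reversed. -/

import Mathlib

/-- `f` is log-concave on `D`: `f(θx + (1−θ)y) ≥ f(x)^θ f(y)^{1−θ}`. -/
def LogConcaveOn (D : Set ℝ) (f : ℝ → ℝ) : Prop :=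
  ∀ ⦃x⦄, x ∈ D → ∀ ⦃y⦄, y ∈ D → ∀ ⦃θ : ℝ⦄, θ ∈ Set.Icc (0 : ℝ) 1 →
    f x ^ θ * f y ^ (1 - θ) ≤ f (θ * x + (1 - θ) * y)

/-- `f` is log-convex on `D`: `f(θx + (1−θ)y) ≤ f(x)^θ f(y)^{1−θ}`. -/
def LogConvexOn (D : Set ℝ) (f : ℝ → ℝ) : Prop :=
  ∀ ⦃x⦄, x ∈ D → ∀ ⦃y⦄, y ∈ D → ∀ ⦃θ : ℝ⦄, θ ∈ Set.Icc (0 : ℝ) 1 →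
    f (θ * x + (1 - θ) * y) ≤ f x ^ θ * f y ^ (1 - θ)

/-- Product rearrangement identity used in both directions. -/
lemma prod_tail_aux (F : ℝ → ℝ) (hF0 : ∀ x ≥ (0 : ℝ), 0 ≤ F x)
    (u r : ℕ) (hu : 2 ≤ u) (hr : 1 ≤ r) (t : ℕ → ℝ)
    (ht : ∀ i j, 1 ≤ i → i ≤ j → j ≤ u → t i ≤ t j) (x : ℝ) (hx : 0 ≤ x) :
    ∏ i ∈ Finset.Icc 1 u,
        F ((x + (u : ℝ) * (t u - t i)) / (r : ℝ)) ^ ((r : ℝ) / (u : ℝ))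
      = ∏ i ∈ Finset.Icc 1 (u - 1),
          (F ((x + (u : ℝ) * (t u - t i)) / (r : ℝ)) ^ (((u : ℝ) - 1) / (u : ℝ))
            * F (x / (r : ℝ)) ^ (1 / (u : ℝ))) ^ ((r : ℝ) / ((u : ℝ) - 1)) := by
  have hu0 : (0:ℝ) < (u:ℝ) := by positivity
  have hu0' : (u:ℝ) ≠ 0 := ne_of_gt hu0
  have hu1 : (u:ℝ) - 1 ≠ 0 := by
    have : (2:ℝ) ≤ (u:ℝ) := by exact_mod_cast hu
    linarith
  have hr0 : (0:ℝ) < (r:ℝ) := by positivity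
  have hargpos : ∀ i, 1 ≤ i → i ≤ u → 0 ≤ (x + (u : ℝ) * (t u - t i)) / (r : ℝ) := by
    intro i h1 h2
    have := ht i u h1 h2 le_rfl
    have : 0 ≤ t u - t i := by linarith
    positivity
  have hxr : 0 ≤ x / (r:ℝ) := by positivity
  have hins : Finset.Icc 1 u = insert u (Finset.Icc 1 (u-1)) := by
    ext a; simp only [Finset.mem_Icc, Finset.mem_insert]; omega
  have hnotmem : u ∉ Finset.Icc 1 (u-1) := by simp; omega
  rw [hins, Finset.prod_insert hnotmem]
  have hgu : F ((x + (u : ℝ) * (t u - t u)) / (r : ℝ)) = F (x / (r:ℝ)) := by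
    simp
  rw [hgu]
  -- simplify RHS termwise
  have hterm : ∀ i ∈ Finset.Icc 1 (u-1),
      (F ((x + (u : ℝ) * (t u - t i)) / (r : ℝ)) ^ (((u : ℝ) - 1) / (u : ℝ))
        * F (x / (r : ℝ)) ^ (1 / (u : ℝ))) ^ ((r : ℝ) / ((u : ℝ) - 1))
      = F ((x + (u : ℝ) * (t u - t i)) / (r : ℝ)) ^ ((r : ℝ) / (u : ℝ))
        * F (x / (r : ℝ)) ^ ((r : ℝ) / ((u:ℝ) * ((u:ℝ) - 1))) := by
    intro i hi
    simp only [Finset.mem_Icc] at hi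
    have h1 : 0 ≤ F ((x + (u : ℝ) * (t u - t i)) / (r : ℝ)) :=
      hF0 _ (hargpos i hi.1 (by omega))
    have h2 : 0 ≤ F (x / (r:ℝ)) := hF0 _ hxr
    rw [Real.mul_rpow (by positivity) (by positivity),
      ← Real.rpow_mul h1, ← Real.rpow_mul h2]
    congr 1
    · congr 1; field_simp
    · congr 1; field_simp
  rw [Finset.prod_congr rfl hterm, Finset.prod_mul_distrib, Finset.prod_const]
  have hcard : (Finset.Icc 1 (u-1)).card = u - 1 := by
    rw [Nat.card_Icc]; omega
  rw [hcard]
  have h2 : 0 ≤ F (x / (r:ℝ)) := hF0 _ hxr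
  have hpow : (F (x / (r : ℝ)) ^ ((r : ℝ) / ((u:ℝ) * ((u:ℝ) - 1)))) ^ (u - 1)
      = F (x / (r:ℝ)) ^ ((r:ℝ) / (u:ℝ)) := by
    rw [← Real.rpow_natCast (F (x / (r : ℝ)) ^ ((r : ℝ) / ((u:ℝ) * ((u:ℝ) - 1)))) (u-1),
      ← Real.rpow_mul h2]
    congr 1
    have hc : ((u - 1 : ℕ) : ℝ) = (u:ℝ) - 1 := by
      have : 1 ≤ u := by omega
      push_cast [this]; ring
    rw [hc]
    field_simp
  rw [hpow]
  ring

/-- For a tail distribution `F̄ : [0,∞) → [0,1]`, log-concavity implies, for all `u ≥ 2`,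
`r ≥ 1`, `t_1 ≤ … ≤ t_u` and `x ≥ 0`,
`Π_{i=1}^{u} F̄((x + u(t_u − t_i))/r)^{r/u} ≤ Π_{i=1}^{u−1} F̄((x + (u−1)(t_u − t_i))/r)^{r/(u−1)}`;
log-convexity implies the reverse inequality. -/
theorem prod_tail_rpow_ineq (F : ℝ → ℝ)
    (hrange : ∀ x ≥ (0 : ℝ), F x ∈ Set.Icc (0 : ℝ) 1) :
    (LogConcaveOn (Set.Ici 0) F →
      ∀ u : ℕ, 2 ≤ u → ∀ r : ℕ, 1 ≤ r → ∀ t : ℕ → ℝ,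
        (∀ i j, 1 ≤ i → i ≤ j → j ≤ u → t i ≤ t j) → ∀ x ≥ (0 : ℝ),
        ∏ i ∈ Finset.Icc 1 u,
            F ((x + (u : ℝ) * (t u - t i)) / (r : ℝ)) ^ ((r : ℝ) / (u : ℝ))
          ≤ ∏ i ∈ Finset.Icc 1 (u - 1),
              F ((x + ((u : ℝ) - 1) * (t u - t i)) / (r : ℝ)) ^ ((r : ℝ) / ((u : ℝ) - 1))) ∧
    (LogConvexOn (Set.Ici 0) F →
      ∀ u : ℕ, 2 ≤ u → ∀ r : ℕ, 1 ≤ r → ∀ t : ℕ → ℝ,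
        (∀ i j, 1 ≤ i → i ≤ j → j ≤ u → t i ≤ t j) → ∀ x ≥ (0 : ℝ),
        ∏ i ∈ Finset.Icc 1 (u - 1),
            F ((x + ((u : ℝ) - 1) * (t u - t i)) / (r : ℝ)) ^ ((r : ℝ) / ((u : ℝ) - 1))
          ≤ ∏ i ∈ Finset.Icc 1 u,
              F ((x + (u : ℝ) * (t u - t i)) / (r : ℝ)) ^ ((r : ℝ) / (u : ℝ))) := by
  have hF0 : ∀ x ≥ (0:ℝ), 0 ≤ F x := fun x hx => (hrange x hx).1
  constructor
  · intro hF u hu r hr t ht x hx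
    have h2u : (2:ℝ) ≤ (u:ℝ) := by exact_mod_cast hu
    have hu0 : (0:ℝ) < (u:ℝ) := by linarith
    have hr0 : (0:ℝ) < (r:ℝ) := by exact_mod_cast hr
    rw [prod_tail_aux F hF0 u r hu hr t ht x hx]
    apply Finset.prod_le_prod
    · intro i hi
      simp only [Finset.mem_Icc] at hi
      have hiu : i ≤ u := by omega
      have hti : 0 ≤ t u - t i := by
        have := ht i u hi.1 hiu le_rfl; linarith
      have h1 : 0 ≤ F ((x + (u : ℝ) * (t u - t i)) / (r : ℝ)) :=
        hF0 _ (by positivity)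
      have h2 : 0 ≤ F (x / (r:ℝ)) := hF0 _ (by positivity)
      positivity
    · intro i hi
      simp only [Finset.mem_Icc] at hi
      have hiu : i ≤ u := by omega
      have hti : 0 ≤ t u - t i := by
        have := ht i u hi.1 hiu le_rfl; linarith
      have hA : (x + (u : ℝ) * (t u - t i)) / (r : ℝ) ∈ Set.Ici (0:ℝ) := by
        simp only [Set.mem_Ici]; positivity
      have hB : x / (r : ℝ) ∈ Set.Ici (0:ℝ) := by
        simp only [Set.mem_Ici]; positivity
      have hθ : ((u:ℝ)-1)/(u:ℝ) ∈ Set.Icc (0:ℝ) 1 := by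
        constructor
        · apply div_nonneg (by linarith) hu0.le
        · rw [div_le_one hu0]; linarith
      have hlc := hF hA hB hθ
      have hcomb : ((u:ℝ)-1)/(u:ℝ) * ((x + (u:ℝ)*(t u - t i))/(r:ℝ))
          + (1 - ((u:ℝ)-1)/(u:ℝ)) * (x/(r:ℝ))
          = (x + ((u:ℝ)-1)*(t u - t i))/(r:ℝ) := by
        field_simp; ring
      have h1θ : 1 - ((u:ℝ)-1)/(u:ℝ) = 1/(u:ℝ) := by field_simp; ring
      rw [hcomb, h1θ] at hlc
      apply Real.rpow_le_rpow _ hlc (div_nonneg hr0.le (by linarith))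
      have h1 : 0 ≤ F ((x + (u : ℝ) * (t u - t i)) / (r : ℝ)) := hF0 _ hA
      have h2 : 0 ≤ F (x / (r:ℝ)) := hF0 _ hB
      positivity
  · intro hF u hu r hr t ht x hx
    have h2u : (2:ℝ) ≤ (u:ℝ) := by exact_mod_cast hu
    have hu0 : (0:ℝ) < (u:ℝ) := by linarith
    have hr0 : (0:ℝ) < (r:ℝ) := by exact_mod_cast hr
    rw [prod_tail_aux F hF0 u r hu hr t ht x hx]
    apply Finset.prod_le_prod
    · intro i hi
      simp only [Finset.mem_Icc] at hi
      have hiu : i ≤ u := by omega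
      have hti : 0 ≤ t u - t i := by
        have := ht i u hi.1 hiu le_rfl; linarith
      have hC : 0 ≤ (x + ((u:ℝ)-1)*(t u - t i))/(r:ℝ) := by
        apply div_nonneg _ hr0.le
        have : 0 ≤ ((u:ℝ)-1)*(t u - t i) := mul_nonneg (by linarith) hti
        linarith
      have := hF0 _ hC
      positivity
    · intro i hi
      simp only [Finset.mem_Icc] at hi
      have hiu : i ≤ u := by omega
      have hti : 0 ≤ t u - t i := by
        have := ht i u hi.1 hiu le_rfl; linarith
      have hA : (x + (u : ℝ) * (t u - t i)) / (r : ℝ) ∈ Set.Ici (0:ℝ) := by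
        simp only [Set.mem_Ici]; positivity
      have hB : x / (r : ℝ) ∈ Set.Ici (0:ℝ) := by
        simp only [Set.mem_Ici]; positivity
      have hθ : ((u:ℝ)-1)/(u:ℝ) ∈ Set.Icc (0:ℝ) 1 := by
        constructor
        · apply div_nonneg (by linarith) hu0.le
        · rw [div_le_one hu0]; linarith
      have hlc := hF hA hB hθ
      have hcomb : ((u:ℝ)-1)/(u:ℝ) * ((x + (u:ℝ)*(t u - t i))/(r:ℝ))
          + (1 - ((u:ℝ)-1)/(u:ℝ)) * (x/(r:ℝ))
          = (x + ((u:ℝ)-1)*(t u - t i))/(r:ℝ) := by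
        field_simp; ring
      have h1θ : 1 - ((u:ℝ)-1)/(u:ℝ) = 1/(u:ℝ) := by field_simp; ring
      rw [hcomb, h1θ] at hlc
      have hC : 0 ≤ (x + ((u:ℝ)-1)*(t u - t i))/(r:ℝ) := by
        apply div_nonneg _ hr0.le
        have : 0 ≤ ((u:ℝ)-1)*(t u - t i) := mul_nonneg (by linarith) hti
        linarith
      exact Real.rpow_le_rpow (hF0 _ hC) hlc (div_nonneg hr0.le (by linarith))
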